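/- arXiv:1709.03519 — 4 statements merged into one kernel-verified Lean document; each statement's English description precedes it below -/
import Mathlib

section
/- Let V and Q be real Hilbert spaces, a : V × V → ℝ a continuous bilinear form, b : V × Q → ℝ a continuous bilinear form, and J : V → ℝ, F : Q → ℝ continuous linear functionals. If a is coercive on the kernel K = {v ∈ V : ∀ q, b(v,q) = 0} and b satisfies the inf-sup condition (∃ β > 0, ∀ q ∈ Q, sup_{v ≠ 0} b(v,q)/‖v‖ ≥ β‖q‖), then the saddle-point problem — find (u,p) ∈ V × Q with a(u,v) + b(v,p) = J(v) for all v ∈ V and b(u,q) = F(q) for all q ∈ Q — has a unique solution. -/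
open InnerProductSpace RealInnerProductSpace

set_option maxHeartbeats 1000000

/-- Babuška–Brezzi well-posedness of the abstract saddle-point problem:
if the continuous bilinear form `a` is coercive on the kernel of `b` and `b`
satisfies the inf-sup condition, then for any continuous linear functionals
`J`, `F` the saddle-point problem has a unique solution `(u, p)`. -/
theorem babuska_brezzi_wellposedness
    {V Q : Type*}
    [NormedAddCommGroup V] [InnerProductSpace ℝ V] [CompleteSpace V]
    [NormedAddCommGroup Q] [InnerProductSpace ℝ Q] [CompleteSpace Q]
    (a : V → V → ℝ) (b : V → Q → ℝ)
    (ha_lin₁ : ∀ v, IsLinearMap ℝ fun u => a u v)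
    (ha_lin₂ : ∀ u, IsLinearMap ℝ (a u))
    (ha_cont : ∃ Ca : ℝ, ∀ u v, |a u v| ≤ Ca * ‖u‖ * ‖v‖)
    (hb_lin₁ : ∀ q, IsLinearMap ℝ fun v => b v q)
    (hb_lin₂ : ∀ v, IsLinearMap ℝ (b v))
    (hb_cont : ∃ Cb : ℝ, ∀ v q, |b v q| ≤ Cb * ‖v‖ * ‖q‖)
    (J : V →L[ℝ] ℝ) (F : Q →L[ℝ] ℝ)
    -- coercivity of `a` on the kernel `K = {v : ∀ q, b v q = 0}`
    (hcoer : ∃ α : ℝ, 0 < α ∧ ∀ v : V, (∀ q : Q, b v q = 0) → α * ‖v‖ ^ 2 ≤ a v v)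
    -- inf-sup condition on `b`
    (hinfsup : ∃ β : ℝ, 0 < β ∧ ∀ q : Q,
      β * ‖q‖ ≤ ⨆ v : {v : V // v ≠ 0}, b (v : V) q / ‖(v : V)‖) :
    ∃! up : V × Q,
      (∀ v : V, a up.1 v + b v up.2 = J v) ∧ (∀ q : Q, b up.1 q = F q) := by
  obtain ⟨Ca, hCa⟩ := ha_cont
  obtain ⟨Cb, hCb⟩ := hb_cont
  obtain ⟨α, hα, hcoer⟩ := hcoer
  obtain ⟨β, hβ, hinfsup⟩ := hinfsup
  -- the continuous bilinear maps associated to `a` and `b`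
  let bL : V →ₗ[ℝ] Q →ₗ[ℝ] ℝ := LinearMap.mk₂ ℝ b
    (fun u v q => (hb_lin₁ q).map_add u v) (fun c u q => (hb_lin₁ q).map_smul c u)
    (fun v q₁ q₂ => (hb_lin₂ v).map_add q₁ q₂) (fun c v q => (hb_lin₂ v).map_smul c q)
  let B : V →L[ℝ] Q →L[ℝ] ℝ := bL.mkContinuous₂ Cb (fun v q => by
    simpa [bL] using hCb v q)
  have hB : ∀ v q, B v q = b v q := fun v q => rfl
  let aL : V →ₗ[ℝ] V →ₗ[ℝ] ℝ := LinearMap.mk₂ ℝ a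
    (fun u v w => (ha_lin₁ w).map_add u v) (fun c u w => (ha_lin₁ w).map_smul c u)
    (fun v w₁ w₂ => (ha_lin₂ v).map_add w₁ w₂) (fun c v w => (ha_lin₂ v).map_smul c w)
  let A : V →L[ℝ] V →L[ℝ] ℝ := aL.mkContinuous₂ Ca (fun u v => by
    simpa [aL] using hCa u v)
  have hA : ∀ u v, A u v = a u v := fun u v => rfl
  -- the "adjoint" map `T : Q → V` with `⟪T q, v⟫ = b v q`
  set T : Q → V := fun q => (InnerProductSpace.toDual ℝ V).symm (B.flip q) with hTdef
  have hT : ∀ q v, ⟪T q, v⟫_ℝ = b v q := fun q v =>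
    InnerProductSpace.toDual_symm_apply
  have hT' : ∀ q v, ⟪v, T q⟫_ℝ = b v q := fun q v => by
    rw [real_inner_comm]; exact hT q v
  -- `T` is bounded below thanks to the inf-sup condition
  have hTlb : ∀ q, β * ‖q‖ ≤ ‖T q‖ := by
    intro q
    refine le_trans (hinfsup q) (Real.iSup_le (fun v => ?_) (norm_nonneg _))
    have hv : (0:ℝ) < ‖(v:V)‖ := norm_pos_iff.mpr v.2
    rw [div_le_iff₀ hv, ← hT q v]
    exact real_inner_le_norm _ _
  -- basic algebraic properties of `T`
  have hTadd : ∀ q q', T (q + q') = T q + T q' := by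
    intro q q'
    refine ext_inner_right ℝ fun v => ?_
    rw [hT, inner_add_left, hT, hT, (hb_lin₂ v).map_add]
  have hTsmul : ∀ (r : ℝ) q, T (r • q) = r • T q := by
    intro r q
    refine ext_inner_right ℝ fun v => ?_
    rw [hT, real_inner_smul_left, hT, (hb_lin₂ v).map_smul]
    simp
  have hTnorm : ∀ q, ‖T q‖ ≤ ‖B.flip‖ * ‖q‖ := by
    intro q
    have h1 : ‖T q‖ = ‖B.flip q‖ := by
      rw [hTdef]; exact LinearIsometryEquiv.norm_map _ _
    rw [h1]; exact B.flip.le_opNorm q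
  -- the bilinear form `c p q = ⟪T p, T q⟫` on `Q`
  let cL : Q →ₗ[ℝ] Q →ₗ[ℝ] ℝ := LinearMap.mk₂ ℝ (fun p q => ⟪T p, T q⟫_ℝ)
    (fun p p' q => by simp only [hTadd, inner_add_left])
    (fun r p q => by simp only [hTsmul, real_inner_smul_left, smul_eq_mul])
    (fun p q q' => by simp only [hTadd, inner_add_right])
    (fun r p q => by simp only [hTsmul, real_inner_smul_right, smul_eq_mul])
  let C : Q →L[ℝ] Q →L[ℝ] ℝ := cL.mkContinuous₂ (‖B.flip‖ * ‖B.flip‖) (fun p q => by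
    have h1 := hTnorm p
    have h2 := hTnorm q
    have h0 : ‖(cL p) q‖ ≤ ‖T p‖ * ‖T q‖ := by
      simpa [cL] using abs_real_inner_le_norm (T p) (T q)
    refine h0.trans ?_
    have hBp : (0:ℝ) ≤ ‖B.flip‖ := norm_nonneg B.flip
    nlinarith [norm_nonneg (T p), norm_nonneg (T q), norm_nonneg p, norm_nonneg q])
  have hCapp : ∀ p q, C p q = ⟪T p, T q⟫_ℝ := fun p q => rfl
  have hCcoer : IsCoercive C := by
    refine ⟨β * β, mul_pos hβ hβ, fun q => ?_⟩
    have h1 := hTlb q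
    have : C q q = ‖T q‖ * ‖T q‖ := by
      rw [hCapp, real_inner_self_eq_norm_mul_norm]
    rw [this]
    nlinarith [h1, mul_self_le_mul_self (mul_nonneg hβ.le (norm_nonneg q)) h1,
      mul_nonneg hβ.le (norm_nonneg q)]
  set eQ := hCcoer.continuousLinearEquivOfBilin with heQ
  have heQapp : ∀ p q, ⟪eQ p, q⟫_ℝ = ⟪T p, T q⟫_ℝ := fun p q =>
    hCcoer.continuousLinearEquivOfBilin_apply p q
  -- solving `b u q = f q` for any functional `f` on `Q`
  have hsolveC : ∀ f : Q →L[ℝ] ℝ, ∃ p : Q, ∀ q, ⟪T p, T q⟫_ℝ = f q := by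
    intro f
    refine ⟨eQ.symm ((InnerProductSpace.toDual ℝ Q).symm f), fun q => ?_⟩
    rw [← heQapp, eQ.apply_symm_apply]
    exact InnerProductSpace.toDual_symm_apply
  have hsolveB : ∀ f : Q →L[ℝ] ℝ, ∃ u : V, ∀ q, b u q = f q := by
    intro f
    obtain ⟨p, hp⟩ := hsolveC f
    exact ⟨T p, fun q => by rw [← hT q (T p), real_inner_comm, hp q]⟩
  -- the kernel `K` of `B` as a Hilbert space
  set K : Submodule ℝ V := B.ker with hK
  have hKmem : ∀ v : V, v ∈ K ↔ ∀ q, b v q = 0 := by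
    intro v
    constructor
    · intro hv q
      rw [← hB]
      rw [hK, LinearMap.mem_ker] at hv
      rw [show B v = 0 from hv]; rfl
    · intro hv
      rw [hK, LinearMap.mem_ker]
      ext q; simpa [hB] using hv q
  have hKclosed : IsClosed (K : Set V) := ContinuousLinearMap.isClosed_ker B
  haveI : CompleteSpace K := hKclosed.completeSpace_coe
  -- the restriction of `a` to `K` and Lax–Milgram on `K`
  let AK : K →L[ℝ] K →L[ℝ] ℝ := A.bilinearComp K.subtypeL K.subtypeL
  have hAKapp : ∀ u v : K, AK u v = a (u:V) (v:V) := fun u v => rfl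
  have hAKcoer : IsCoercive AK := by
    refine ⟨α, hα, fun u => ?_⟩
    have := hcoer (u:V) ((hKmem (u:V)).mp u.2)
    rw [hAKapp]
    calc α * ‖u‖ * ‖u‖ = α * ‖(u:V)‖ ^ 2 := by
          rw [Submodule.coe_norm]; ring
      _ ≤ a (u:V) (u:V) := this
  set eK := hAKcoer.continuousLinearEquivOfBilin with heK
  have heKapp : ∀ w v : K, ⟪eK w, v⟫_ℝ = a (w:K) (v:K) := fun w v =>
    hAKcoer.continuousLinearEquivOfBilin_apply w v
  -- construct the solution
  obtain ⟨u₀, hu₀⟩ := hsolveB F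
  obtain ⟨w, hw⟩ : ∃ w : K, ∀ v : K, a (w:V) (v:V) = J v - a u₀ v := by
    refine ⟨eK.symm ((InnerProductSpace.toDual ℝ K).symm
      ((J - A u₀).comp K.subtypeL)), fun v => ?_⟩
    have h2 := heKapp (eK.symm ((InnerProductSpace.toDual ℝ K).symm
      ((J - A u₀).comp K.subtypeL))) v
    rw [eK.apply_symm_apply] at h2
    rw [← h2, InnerProductSpace.toDual_symm_apply]
    simp [hA]
  set u : V := u₀ + (w:V) with hudef
  have hbu : ∀ q, b u q = F q := by
    intro q
    rw [hudef, (hb_lin₁ q).map_add, hu₀, ((hKmem (w:V)).mp w.2) q, add_zero]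
  -- the functional `g = J - a(u, ·)` vanishes on `K`
  let g : V →L[ℝ] ℝ := J - A u
  have hgK : ∀ v : V, v ∈ K → g v = 0 := by
    intro v hv
    have h1 : a u v = a u₀ v + a (w:V) v := (ha_lin₁ v).map_add u₀ (w:V)
    have h2 := hw ⟨v, hv⟩
    simp only [Submodule.coe_mk] at h2
    simp [g, hA, h1, h2]
  obtain ⟨gV, hgV⟩ : ∃ gV : V, ∀ v : V, ⟪gV, v⟫_ℝ = g v :=
    ⟨(InnerProductSpace.toDual ℝ V).symm g, fun v => InnerProductSpace.toDual_symm_apply⟩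
  -- find `p` with `T p = gV`
  obtain ⟨p, hp0⟩ := hsolveC (B gV)
  have hTp : T p = gV := by
    have hx : ∀ q, ⟪T p - gV, T q⟫_ℝ = 0 := by
      intro q
      have h3 : ⟪gV, T q⟫_ℝ = b gV q := hT' q gV
      rw [inner_sub_left, hp0 q, h3, hB, sub_self]
    have hxK : (T p - gV) ∈ K := by
      rw [hKmem]
      intro q
      rw [← hT q (T p - gV), real_inner_comm]
      exact hx q
    have hxO : ⟪T p - gV, T p - gV⟫_ℝ = 0 := by
      rw [inner_sub_right]
      have e1 : ⟪T p - gV, T p⟫_ℝ = 0 := by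
        rw [real_inner_comm, hT p (T p - gV)]
        exact (hKmem _).mp hxK p
      have e2 : ⟪T p - gV, gV⟫_ℝ = 0 := by
        rw [real_inner_comm, hgV]
        exact hgK _ hxK
      rw [e1, e2, sub_zero]
    have := inner_self_eq_zero.mp hxO
    exact sub_eq_zero.mp this
  have hbp : ∀ v : V, b v p = J v - a u v := by
    intro v
    rw [← hT p v, hTp, hgV]
    simp [g, hA]
  refine ⟨(u, p), ⟨fun v => by rw [hbp v]; ring, hbu⟩, ?_⟩
  -- uniqueness
  rintro ⟨u', p'⟩ ⟨h1', h2'⟩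
  have hd : ∀ q, b (u' - u) q = 0 := by
    intro q
    rw [(hb_lin₁ q).map_sub, hbu q, h2' q, sub_self]
  have hdK : (u' - u) ∈ K := (hKmem _).mpr hd
  have haa : ∀ v, a (u' - u) v + b v (p' - p) = 0 := by
    intro v
    have e1 : a u' v + b v p' = J v := h1' v
    have e2 : a u v + b v p = J v := by rw [hbp v]; ring
    have := congrArg₂ (· - ·) e1 e2
    simp only [sub_self] at this
    rw [(ha_lin₁ v).map_sub, (hb_lin₂ v).map_sub]
    linarith [e1, e2]
  have huu : u' - u = 0 := by
    have h0 := haa (u' - u)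
    rw [hd (p' - p), add_zero] at h0
    have h1 := hcoer (u' - u) hd
    rw [h0] at h1
    have : ‖u' - u‖ ^ 2 ≤ 0 := by nlinarith
    have hn : ‖u' - u‖ = 0 := by nlinarith [norm_nonneg (u' - u), sq_nonneg ‖u' - u‖]
    exact norm_eq_zero.mp hn
  have hpq : p' - p = 0 := by
    have hb0 : ∀ v, b v (p' - p) = 0 := by
      intro v
      have := haa v
      rw [huu] at this
      have hz : a 0 v = 0 := (ha_lin₁ v).map_zero
      linarith [this, hz]
    have hT0 : T (p' - p) = 0 := by
      refine ext_inner_right ℝ fun v => ?_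
      rw [hT, hb0 v, inner_zero_left]
    have := hTlb (p' - p)
    rw [hT0, norm_zero] at this
    have : ‖p' - p‖ ≤ 0 := by
      by_contra h
      push_neg at h
      nlinarith
    exact norm_eq_zero.mp (le_antisymm this (norm_nonneg _))
  have : u' = u := sub_eq_zero.mp huu
  have hp2 : p' = p := sub_eq_zero.mp hpq
  simp [Prod.ext_iff, this, hp2]
end

section
/- Let H be a real Hilbert space, W a closed subspace with orthogonal projection Π₀ and T₀ = I − Π₀, and let a(u,v) = ⟪u,v⟫. Suppose s : H × H → ℝ is a symmetric positive semidefinite bilinear form such that there exist constants 0 < ι₊ ≤ ι⁺ with ι₊ a(T₀v, T₀v) ≤ s(T₀v, T₀v) ≤ ι⁺ a(T₀v, T₀v) for all v ∈ H. Then the bilinear form a_h(u,v) := a(Π₀u, Π₀v) + s(T₀u, T₀v) satisfies min(1, ι₊) a(v,v) ≤ a_h(v,v) ≤ max(1, ι⁺) a(v,v) for all v ∈ H. -/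
open scoped RealInnerProductSpace

/-- Spectral equivalence of the VEM bilinear form
`a_h(u,v) = a(Π₀u, Π₀v) + s(T₀u, T₀v)` with `a(u,v) = ⟪u,v⟫`:
if `ι₁ a(T₀v,T₀v) ≤ s(T₀v,T₀v) ≤ ι₂ a(T₀v,T₀v)` then
`min(1,ι₁) a(v,v) ≤ a_h(v,v) ≤ max(1,ι₂) a(v,v)`. -/
theorem vem_spectral_equivalence
    {H : Type*} [NormedAddCommGroup H] [InnerProductSpace ℝ H] [CompleteSpace H]
    (W : Submodule ℝ H) [W.HasOrthogonalProjection]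
    (s : H → H → ℝ)
    (hs_lin₁ : ∀ v, IsLinearMap ℝ fun u => s u v)
    (hs_lin₂ : ∀ u, IsLinearMap ℝ (s u))
    (hs_symm : ∀ u v, s u v = s v u)
    (hs_psd : ∀ v, 0 ≤ s v v)
    (ι₁ ι₂ : ℝ) (h₁ : 0 < ι₁) (h₁₂ : ι₁ ≤ ι₂)
    (P₀ : H → H) (hP₀ : ∀ v, P₀ v = ((W.orthogonalProjectionOnto v : W) : H))
    (T₀ : H → H) (hT₀ : ∀ v, T₀ v = v - P₀ v)
    (hequiv : ∀ v : H,
      ι₁ * ⟪T₀ v, T₀ v⟫ ≤ s (T₀ v) (T₀ v) ∧ s (T₀ v) (T₀ v) ≤ ι₂ * ⟪T₀ v, T₀ v⟫) :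
    ∀ v : H,
      min 1 ι₁ * ⟪v, v⟫ ≤ ⟪P₀ v, P₀ v⟫ + s (T₀ v) (T₀ v) ∧
      ⟪P₀ v, P₀ v⟫ + s (T₀ v) (T₀ v) ≤ max 1 ι₂ * ⟪v, v⟫ := by
  intro v
  have horth : ⟪T₀ v, P₀ v⟫ = 0 := by
    rw [hT₀ v, hP₀ v]
    exact W.starProjection_inner_eq_zero v _ (W.orthogonalProjectionOnto v).2
  have hsplit : ⟪v, v⟫ = ⟪P₀ v, P₀ v⟫ + ⟪T₀ v, T₀ v⟫ := by
    have hv : v = P₀ v + T₀ v := by rw [hT₀ v]; abel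
    have horth' : ⟪P₀ v, T₀ v⟫ = 0 := by rw [real_inner_comm]; exact horth
    conv_lhs => rw [hv]
    rw [inner_add_add_self, horth', horth]; ring
  have hp : (0:ℝ) ≤ ⟪P₀ v, P₀ v⟫ := real_inner_self_nonneg
  have ht : (0:ℝ) ≤ ⟪T₀ v, T₀ v⟫ := real_inner_self_nonneg
  obtain ⟨hl, hr⟩ := hequiv v
  constructor
  · have h1 : min 1 ι₁ ≤ 1 := min_le_left _ _
    have h2 : min 1 ι₁ ≤ ι₁ := min_le_right _ _
    nlinarith [min_le_left 1 ι₁, min_le_right 1 ι₁]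
  · nlinarith [le_max_left 1 ι₂, le_max_right 1 ι₂]
end

section
/- Let a : V × V → ℝ be symmetric, continuous and coercive, b : V × Q → ℝ continuous and inf-sup stable on closed subspaces V_h ⊆ V, Q_h ⊆ Q (with inf-sup constant β_h > 0 uniform), and let a_h be a symmetric bilinear form on V_h with c₁ a(v,v) ≤ a_h(v,v) ≤ c₂ a(v,v) for all v ∈ V_h, where 0 < c₁ ≤ c₂. Then the discrete saddle-point problem — find (u_h, p_h) ∈ V_h × Q_h with a_h(u_h,v) + b(v,p_h) = J(v) and b(u_h,q) = F(q) for all (v,q) ∈ V_h × Q_h — has a unique solution for any continuous linear functionals J, F. -/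
open InnerProductSpace RealInnerProductSpace

set_option maxHeartbeats 1000000
set_option synthInstance.maxHeartbeats 1000000

/-- Well-posedness of the discrete VEM saddle-point problem: if `a` is symmetric
continuous coercive, `b` continuous and inf-sup stable on closed subspaces
`V_h ⊆ V`, `Q_h ⊆ Q`, and `a_h` is spectrally equivalent to `a` on `V_h`, then
the discrete saddle-point problem has a unique solution. -/
theorem discrete_saddle_point_wellposed
    {V Q : Type*}
    [NormedAddCommGroup V] [InnerProductSpace ℝ V] [CompleteSpace V]
    [NormedAddCommGroup Q] [InnerProductSpace ℝ Q] [CompleteSpace Q]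
    (a : V → V → ℝ) (b : V → Q → ℝ) (ah : V → V → ℝ)
    (ha_symm : ∀ u v, a u v = a v u)
    (ha_lin₁ : ∀ v, IsLinearMap ℝ fun u => a u v)
    (ha_lin₂ : ∀ u, IsLinearMap ℝ (a u))
    (ha_cont : ∃ Ca : ℝ, ∀ u v, |a u v| ≤ Ca * ‖u‖ * ‖v‖)
    (ha_coer : ∃ α : ℝ, 0 < α ∧ ∀ v, α * ‖v‖ ^ 2 ≤ a v v)
    (hb_lin₁ : ∀ q, IsLinearMap ℝ fun v => b v q)
    (hb_lin₂ : ∀ v, IsLinearMap ℝ (b v))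
    (hb_cont : ∃ Cb : ℝ, ∀ v q, |b v q| ≤ Cb * ‖v‖ * ‖q‖)
    (Vh : Submodule ℝ V) (hVh : IsClosed (Vh : Set V))
    (Qh : Submodule ℝ Q) (hQh : IsClosed (Qh : Set Q))
    -- discrete inf-sup condition with constant `β_h > 0`
    (hinfsup : ∃ βh : ℝ, 0 < βh ∧ ∀ q ∈ Qh,
      βh * ‖q‖ ≤ ⨆ v : {v : Vh // v ≠ 0}, b (v : V) q / ‖(v : Vh)‖)
    (hah_symm : ∀ u v, ah u v = ah v u)
    (hah_lin₁ : ∀ v, IsLinearMap ℝ fun u => ah u v)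
    (hah_lin₂ : ∀ u, IsLinearMap ℝ (ah u))
    -- spectral equivalence of `a_h` with `a` on `V_h`
    (c₁ c₂ : ℝ) (hc₁ : 0 < c₁) (hc₁₂ : c₁ ≤ c₂)
    (hequiv : ∀ v ∈ Vh, c₁ * a v v ≤ ah v v ∧ ah v v ≤ c₂ * a v v)
    (J : V →L[ℝ] ℝ) (F : Q →L[ℝ] ℝ) :
    ∃! up : Vh × Qh,
      (∀ v ∈ Vh, ah (up.1 : V) v + b v (up.2 : Q) = J v) ∧
      (∀ q ∈ Qh, b (up.1 : V) q = F q) := by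
  classical
  obtain ⟨Ca, hCa⟩ := ha_cont
  obtain ⟨α, hα, hαc⟩ := ha_coer
  obtain ⟨Cb, hCb⟩ := hb_cont
  obtain ⟨βh, hβh, hIS⟩ := hinfsup
  haveI : CompleteSpace Vh := hVh.completeSpace_coe
  haveI : CompleteSpace Qh := hQh.completeSpace_coe
  have hc₂ : (0:ℝ) ≤ c₂ := le_trans hc₁.le hc₁₂
  -- basic pointwise facts about `ah` on `Vh`
  have ah_nonneg : ∀ w : Vh, 0 ≤ ah (w : V) (w : V) := by
    intro w
    have h1 := (hequiv w w.2).1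
    have h2 := hαc (w : V)
    have ha0 : (0:ℝ) ≤ a (w : V) (w : V) := le_trans (by positivity) h2
    nlinarith [mul_nonneg hc₁.le ha0]
  have ah_coer : ∀ w : Vh, c₁ * α * ‖w‖ ^ 2 ≤ ah (w : V) (w : V) := by
    intro w
    have h1 := (hequiv w w.2).1
    have h2 := hαc (w : V)
    rw [Submodule.coe_norm]
    nlinarith
  have ah_upper : ∀ w : Vh, ah (w : V) (w : V) ≤ (c₂ * |Ca|) * ‖w‖ ^ 2 := by
    intro w
    have h1 := (hequiv w w.2).2
    have h2 := hCa (w : V) (w : V)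
    have h3 : a (w : V) (w : V) ≤ |Ca| * ‖(w : V)‖ * ‖(w : V)‖ := by
      refine (le_abs_self _).trans (h2.trans ?_)
      nlinarith [le_abs_self Ca, norm_nonneg (w : V), mul_nonneg (norm_nonneg (w : V)) (norm_nonneg (w : V))]
    rw [Submodule.coe_norm]
    nlinarith [norm_nonneg (w : V)]
  -- the bilinear form ah as a linear map on V, for expansion purposes
  let ahL : V →ₗ[ℝ] V →ₗ[ℝ] ℝ := LinearMap.mk₂ ℝ ah
    (fun m n p => (hah_lin₁ p).map_add m n)
    (fun c m n => (hah_lin₁ n).map_smul c m)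
    (fun m n p => (hah_lin₂ m).map_add n p)
    (fun c m n => (hah_lin₂ m).map_smul c n)
  have ah_expand : ∀ (x y : V) (t : ℝ),
      ah (x + t • y) (x + t • y) = ah x x + 2 * t * ah x y + t ^ 2 * ah y y := by
    intro x y t
    have : ahL (x + t • y) (x + t • y) = ahL x x + 2 * t * ahL x y + t ^ 2 * ahL y y := by
      simp only [map_add, map_smul, LinearMap.add_apply, LinearMap.smul_apply, smul_eq_mul]
      have hsymm : ahL y x = ahL x y := hah_symm y x
      rw [hsymm]; ring
    exact this
  -- Cauchy–Schwarz for ah on Vh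
  have ah_cs : ∀ u v : Vh, (ah (u : V) (v : V)) ^ 2 ≤ ah (u : V) (u : V) * ah (v : V) (v : V) := by
    intro u v
    have key : ∀ t : ℝ, 0 ≤ ah (v : V) (v : V) * (t * t) + (2 * ah (u : V) (v : V)) * t
        + ah (u : V) (u : V) := by
      intro t
      have h0 := ah_nonneg (u + t • v)
      have hco : ((u + t • v : Vh) : V) = (u : V) + t • (v : V) := by
        simp
      rw [hco, ah_expand] at h0
      nlinarith [h0]
    have hd := discrim_le_zero key
    rw [discrim] at hd
    nlinarith [hd]
  have ah_bound : ∀ u v : Vh, |ah (u : V) (v : V)| ≤ (c₂ * |Ca|) * ‖u‖ * ‖v‖ := by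
    intro u v
    have h1 := ah_cs u v
    have h2 := ah_upper u
    have h3 := ah_upper v
    have h4 := ah_nonneg u
    have h5 := ah_nonneg v
    have hC : (0:ℝ) ≤ c₂ * |Ca| := mul_nonneg hc₂ (abs_nonneg _)
    have hnu := norm_nonneg u
    have hnv := norm_nonneg v
    have hy : (0:ℝ) ≤ (c₂ * |Ca|) * ‖u‖ * ‖v‖ := by positivity
    have hsq : (ah (u : V) (v : V)) ^ 2 ≤ ((c₂ * |Ca|) * ‖u‖ * ‖v‖) ^ 2 := by
      nlinarith [mul_nonneg hnu hnv, sq_nonneg ‖u‖, sq_nonneg ‖v‖,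
        mul_nonneg (mul_nonneg hC (sq_nonneg ‖u‖)) h5]
    nlinarith [sq_abs (ah (u : V) (v : V)), abs_nonneg (ah (u : V) (v : V)), hsq, hy]
  -- continuous bilinear form Ah on Vh
  let ahLh : Vh →ₗ[ℝ] Vh →ₗ[ℝ] ℝ := LinearMap.mk₂ ℝ (fun u v : Vh => ah (u : V) (v : V))
    (fun m n p => by simp only [Submodule.coe_add]; exact (hah_lin₁ (p : V)).map_add m n)
    (fun c m n => by simp only [Submodule.coe_smul]; exact (hah_lin₁ (n : V)).map_smul c m)
    (fun m n p => by simp only [Submodule.coe_add]; exact (hah_lin₂ (m : V)).map_add n p)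
    (fun c m n => by simp only [Submodule.coe_smul]; exact (hah_lin₂ (m : V)).map_smul c n)
  let Ah : Vh →L[ℝ] Vh →L[ℝ] ℝ := LinearMap.mkContinuous₂ ahLh (c₂ * |Ca|)
    (fun u v => by simpa [ahLh, Real.norm_eq_abs] using ah_bound u v)
  have Ah_apply : ∀ u v : Vh, Ah u v = ah (u : V) (v : V) := fun _ _ => rfl
  have Ah_coer : IsCoercive Ah := by
    refine ⟨c₁ * α, mul_pos hc₁ hα, fun u => ?_⟩
    have := ah_coer u
    rw [Ah_apply]
    nlinarith [this]
  let E := Ah_coer.continuousLinearEquivOfBilin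
  have hE : ∀ u w : Vh, ⟪E u, w⟫_ℝ = ah (u : V) (w : V) := fun u w =>
    Ah_coer.continuousLinearEquivOfBilin_apply u w
  -- continuous bilinear form b on Vh × Qh
  let bLh : Vh →ₗ[ℝ] Qh →ₗ[ℝ] ℝ := LinearMap.mk₂ ℝ (fun v : Vh => fun q : Qh => b (v : V) (q : Q))
    (fun m n p => by simp only [Submodule.coe_add]; exact (hb_lin₁ (p : Q)).map_add m n)
    (fun c m n => by simp only [Submodule.coe_smul]; exact (hb_lin₁ (n : Q)).map_smul c m)
    (fun m n p => by simp only [Submodule.coe_add]; exact (hb_lin₂ (m : V)).map_add n p)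
    (fun c m n => by simp only [Submodule.coe_smul]; exact (hb_lin₂ (m : V)).map_smul c n)
  let Bh : Vh →L[ℝ] Qh →L[ℝ] ℝ := LinearMap.mkContinuous₂ bLh |Cb|
    (fun v q => by
      simp only [bLh, LinearMap.mk₂_apply, Real.norm_eq_abs]
      refine (hCb (v : V) (q : Q)).trans ?_
      rw [Submodule.coe_norm, Submodule.coe_norm]
      have hmn : (0:ℝ) ≤ ‖(v : V)‖ * ‖(q : Q)‖ := mul_nonneg (norm_nonneg _) (norm_nonneg _)
      nlinarith [mul_le_mul_of_nonneg_right (le_abs_self Cb) hmn])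
  let T : Qh →L[ℝ] Vh := LinearMap.mkContinuous
    { toFun := fun q => (InnerProductSpace.toDual ℝ Vh).symm (Bh.flip q)
      map_add' := fun q q' => by
        show (InnerProductSpace.toDual ℝ Vh).symm (Bh.flip (q + q')) = _
        rw [map_add, map_add]
      map_smul' := fun c q => by
        show (InnerProductSpace.toDual ℝ Vh).symm (Bh.flip (c • q)) = _
        rw [map_smul, map_smulₛₗ]
        simp [starRingEnd_apply] }
    |Cb| (fun q => by
      show ‖(InnerProductSpace.toDual ℝ Vh).symm (Bh.flip q)‖ ≤ |Cb| * ‖q‖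
      rw [LinearIsometryEquiv.norm_map]
      refine ContinuousLinearMap.opNorm_le_bound _ (by positivity) (fun v => ?_)
      show ‖b (v : V) (q : Q)‖ ≤ |Cb| * ‖q‖ * ‖v‖
      rw [Real.norm_eq_abs, Submodule.coe_norm, Submodule.coe_norm]
      have hmn : (0:ℝ) ≤ ‖(v : V)‖ * ‖(q : Q)‖ := mul_nonneg (norm_nonneg _) (norm_nonneg _)
      nlinarith [mul_le_mul_of_nonneg_right (le_abs_self Cb) hmn, hCb (v : V) (q : Q)])
  have hT : ∀ (q : Qh) (v : Vh), ⟪T q, v⟫_ℝ = b (v : V) (q : Q) := by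
    intro q v
    show ⟪(InnerProductSpace.toDual ℝ Vh).symm (Bh.flip q), v⟫_ℝ = b (v : V) (q : Q)
    rw [InnerProductSpace.toDual_symm_apply]
    rfl
  let Bop : Vh →L[ℝ] Qh := LinearMap.mkContinuous
    { toFun := fun u => (InnerProductSpace.toDual ℝ Qh).symm (Bh u)
      map_add' := fun u u' => by
        show (InnerProductSpace.toDual ℝ Qh).symm (Bh (u + u')) = _
        rw [map_add, map_add]
      map_smul' := fun c u => by
        show (InnerProductSpace.toDual ℝ Qh).symm (Bh (c • u)) = _
        rw [map_smul, map_smulₛₗ]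
        simp [starRingEnd_apply] }
    |Cb| (fun u => by
      show ‖(InnerProductSpace.toDual ℝ Qh).symm (Bh u)‖ ≤ |Cb| * ‖u‖
      rw [LinearIsometryEquiv.norm_map]
      refine ContinuousLinearMap.opNorm_le_bound _ (by positivity) (fun q => ?_)
      show ‖b (u : V) (q : Q)‖ ≤ |Cb| * ‖u‖ * ‖q‖
      rw [Real.norm_eq_abs, Submodule.coe_norm, Submodule.coe_norm]
      have hmn : (0:ℝ) ≤ ‖(u : V)‖ * ‖(q : Q)‖ := mul_nonneg (norm_nonneg _) (norm_nonneg _)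
      nlinarith [mul_le_mul_of_nonneg_right (le_abs_self Cb) hmn, hCb (u : V) (q : Q)])
  have hBop : ∀ (u : Vh) (q : Qh), ⟪Bop u, q⟫_ℝ = b (u : V) (q : Q) := by
    intro u q
    show ⟪(InnerProductSpace.toDual ℝ Qh).symm (Bh u), q⟫_ℝ = b (u : V) (q : Q)
    rw [InnerProductSpace.toDual_symm_apply]
    rfl
  -- inf-sup gives a lower bound for T
  have hTlb : ∀ q : Qh, βh * ‖q‖ ≤ ‖T q‖ := by
    intro q
    have h1 := hIS (q : Q) q.2
    rw [Submodule.norm_coe] at h1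
    refine h1.trans (Real.iSup_le ?_ (norm_nonneg _))
    rintro ⟨v, hv⟩
    have hvpos : (0:ℝ) < ‖v‖ := norm_pos_iff.mpr hv
    rw [div_le_iff₀ hvpos]
    calc b (v : V) (q : Q) = ⟪T q, v⟫_ℝ := (hT q v).symm
      _ ≤ ‖T q‖ * ‖v‖ := real_inner_le_norm _ _
  -- Riesz representatives of J and F
  let j : Vh := (InnerProductSpace.toDual ℝ Vh).symm (J.comp Vh.subtypeL)
  have hj : ∀ v : Vh, ⟪j, v⟫_ℝ = J (v : V) := by
    intro v
    show ⟪(InnerProductSpace.toDual ℝ Vh).symm (J.comp Vh.subtypeL), v⟫_ℝ = J (v : V)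
    rw [InnerProductSpace.toDual_symm_apply]
    rfl
  let f : Qh := (InnerProductSpace.toDual ℝ Qh).symm (F.comp Qh.subtypeL)
  have hf : ∀ q : Qh, ⟪f, q⟫_ℝ = F (q : Q) := by
    intro q
    show ⟪(InnerProductSpace.toDual ℝ Qh).symm (F.comp Qh.subtypeL), q⟫_ℝ = F (q : Q)
    rw [InnerProductSpace.toDual_symm_apply]
    rfl
  -- reformulate the problem with operators
  have cond1_iff : ∀ (u : Vh) (p : Qh),
      (∀ v ∈ Vh, ah (u : V) v + b v (p : Q) = J v) ↔ E u + T p = j := by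
    intro u p
    constructor
    · intro h
      apply ext_inner_right ℝ
      intro w
      rw [inner_add_left, hE, hT, hj]
      exact h (w : V) w.2
    · intro h v hv
      have h2 := congrArg (fun x => ⟪x, (⟨v, hv⟩ : Vh)⟫_ℝ) h
      simp only [inner_add_left] at h2
      rw [hE, hT, hj] at h2
      exact h2
  have cond2_iff : ∀ u : Vh,
      (∀ q ∈ Qh, b (u : V) q = F q) ↔ Bop u = f := by
    intro u
    constructor
    · intro h
      apply ext_inner_right ℝ
      intro w
      rw [hBop, hf]
      exact h (w : Q) w.2
    · intro h q hq
      have h2 : ⟪Bop u, (⟨q, hq⟩ : Qh)⟫_ℝ = ⟪f, (⟨q, hq⟩ : Qh)⟫_ℝ := by rw [h]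
      rw [hBop, hf] at h2
      exact h2
  -- the Schur complement operator and its coercivity
  let S : Qh →L[ℝ] Qh := Bop.comp ((E.symm : Vh →L[ℝ] Vh).comp T)
  have hS : ∀ q : Qh, S q = Bop (E.symm (T q)) := fun _ => rfl
  let SbL : Qh →ₗ[ℝ] Qh →ₗ[ℝ] ℝ := LinearMap.mk₂ ℝ (fun q q' : Qh => ⟪S q, q'⟫_ℝ)
    (fun m n p => by show ⟪S (m + n), p⟫_ℝ = ⟪S m, p⟫_ℝ + ⟪S n, p⟫_ℝ; rw [map_add, inner_add_left])
    (fun c m n => by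
      show ⟪S (c • m), n⟫_ℝ = c • ⟪S m, n⟫_ℝ
      rw [map_smul, inner_smul_left]; simp)
    (fun m n p => by show ⟪S m, n + p⟫_ℝ = ⟪S m, n⟫_ℝ + ⟪S m, p⟫_ℝ; rw [inner_add_right])
    (fun c m n => by
      show ⟪S m, c • n⟫_ℝ = c • ⟪S m, n⟫_ℝ
      rw [inner_smul_right]; simp)
  let Sb : Qh →L[ℝ] Qh →L[ℝ] ℝ := LinearMap.mkContinuous₂ SbL ‖S‖
    (fun q q' => by
      simp only [SbL, LinearMap.mk₂_apply, Real.norm_eq_abs]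
      calc |⟪S q, q'⟫_ℝ| ≤ ‖S q‖ * ‖q'‖ := abs_real_inner_le_norm _ _
        _ ≤ ‖S‖ * ‖q‖ * ‖q'‖ := by
            have h := mul_le_mul_of_nonneg_right (S.le_opNorm q) (norm_nonneg q')
            nlinarith [h])
  have Sb_apply : ∀ q q' : Qh, Sb q q' = ⟪S q, q'⟫_ℝ := fun _ _ => rfl
  set CE : ℝ := ‖(E : Vh →L[ℝ] Vh)‖ + 1 with hCEdef
  have hCE : (0:ℝ) < CE := by positivity
  have hTx : ∀ q : Qh, ‖T q‖ ≤ CE * ‖E.symm (T q)‖ := by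
    intro q
    have h1 : T q = (E : Vh →L[ℝ] Vh) (E.symm (T q)) := by simp
    calc ‖T q‖ = ‖(E : Vh →L[ℝ] Vh) (E.symm (T q))‖ := by rw [← h1]
      _ ≤ ‖(E : Vh →L[ℝ] Vh)‖ * ‖E.symm (T q)‖ := (E : Vh →L[ℝ] Vh).le_opNorm _
      _ ≤ CE * ‖E.symm (T q)‖ := by
          nlinarith [norm_nonneg (E.symm (T q))]
  have Sb_coer : IsCoercive Sb := by
    refine ⟨c₁ * α * βh ^ 2 / CE ^ 2, by positivity, fun q => ?_⟩
    set x : Vh := E.symm (T q) with hxdef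
    have e1 : Sb q q = ah (x : V) (x : V) := by
      rw [Sb_apply, hS, hBop, ← hT q x]
      have hTq : T q = E x := by simp [hxdef]
      rw [hTq, hE]
    have e2 : c₁ * α * ‖x‖ ^ 2 ≤ ah (x : V) (x : V) := ah_coer x
    have e3 : βh * ‖q‖ ≤ CE * ‖x‖ := (hTlb q).trans (hTx q)
    have e4 : (βh * ‖q‖) * (βh * ‖q‖) ≤ (CE * ‖x‖) * (CE * ‖x‖) :=
      mul_self_le_mul_self (by positivity) e3
    have hCE2 : (0:ℝ) < CE ^ 2 := by positivity
    have key : c₁ * α * βh ^ 2 * (‖q‖ * ‖q‖) ≤ Sb q q * CE ^ 2 := by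
      rw [e1]
      nlinarith [mul_le_mul_of_nonneg_right e2 hCE2.le,
        mul_le_mul_of_nonneg_left e4 (mul_pos hc₁ hα).le]
    calc c₁ * α * βh ^ 2 / CE ^ 2 * ‖q‖ * ‖q‖
        = (c₁ * α * βh ^ 2 * (‖q‖ * ‖q‖)) / CE ^ 2 := by ring
      _ ≤ Sb q q := by rw [div_le_iff₀ hCE2]; linarith [key]
  let ES := Sb_coer.continuousLinearEquivOfBilin
  have hES : ∀ q : Qh, ES q = S q := by
    intro q
    refine ext_inner_right ℝ fun w => ?_
    rw [Sb_coer.continuousLinearEquivOfBilin_apply, Sb_apply]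
  -- construct the solution
  set p : Qh := ES.symm (Bop (E.symm j) - f) with hpdef
  set u : Vh := E.symm (j - T p) with hudef
  have hsol1 : E u + T p = j := by
    rw [hudef, ContinuousLinearEquiv.apply_symm_apply, sub_add_cancel]
  have hSp : Bop (E.symm (T p)) = Bop (E.symm j) - f := by
    rw [← hS, ← hES, hpdef, ContinuousLinearEquiv.apply_symm_apply]
  have hsol2 : Bop u = f := by
    have hu2 : u = E.symm j - E.symm (T p) := by rw [hudef, map_sub]
    rw [hu2, map_sub, hSp]
    abel
  -- uniqueness
  have uniq : ∀ (u₁ : Vh) (p₁ : Qh) (u₂ : Vh) (p₂ : Qh),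
      E u₁ + T p₁ = j → Bop u₁ = f → E u₂ + T p₂ = j → Bop u₂ = f →
      u₁ = u₂ ∧ p₁ = p₂ := by
    intro u₁ p₁ u₂ p₂ h1 h2 h3 h4
    have hd1 : E (u₁ - u₂) + T (p₁ - p₂) = 0 := by
      rw [map_sub, map_sub]
      have : (E u₁ + T p₁) - (E u₂ + T p₂) = 0 := by rw [h1, h3, sub_self]
      calc E u₁ - E u₂ + (T p₁ - T p₂) = (E u₁ + T p₁) - (E u₂ + T p₂) := by abel
        _ = 0 := this
    have hd2 : Bop (u₁ - u₂) = 0 := by rw [map_sub, h2, h4, sub_self]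
    have hEdu : E (u₁ - u₂) = -(T (p₁ - p₂)) := by
      rw [eq_neg_iff_add_eq_zero]; exact hd1
    have hahdu : ah ((u₁ - u₂ : Vh) : V) ((u₁ - u₂ : Vh) : V) = 0 := by
      have e0 : ⟪E (u₁ - u₂), u₁ - u₂⟫_ℝ = -⟪T (p₁ - p₂), u₁ - u₂⟫_ℝ := by
        rw [hEdu, inner_neg_left]
      have e1 : ⟪T (p₁ - p₂), u₁ - u₂⟫_ℝ = ⟪Bop (u₁ - u₂), p₁ - p₂⟫_ℝ := by
        rw [hT, hBop]
      rw [e1, hd2, inner_zero_left] at e0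
      rw [← hE, e0, neg_zero]
    have hdu0 : u₁ - u₂ = 0 := by
      have hc := ah_coer (u₁ - u₂)
      rw [hahdu] at hc
      have h6 : ‖u₁ - u₂‖ ^ 2 ≤ 0 := by nlinarith [mul_pos hc₁ hα]
      have h7 : ‖u₁ - u₂‖ ^ 2 = 0 := le_antisymm h6 (sq_nonneg _)
      exact norm_eq_zero.mp (sq_eq_zero_iff.mp h7)
    have hu12 : u₁ = u₂ := sub_eq_zero.mp hdu0
    have hTdp : T (p₁ - p₂) = 0 := by
      have : E (u₁ - u₂) = 0 := by rw [hdu0, map_zero]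
      rw [this, zero_add] at hd1
      exact hd1
    have hdp0 : p₁ - p₂ = 0 := by
      have h5 := hTlb (p₁ - p₂)
      rw [hTdp, norm_zero] at h5
      have : ‖p₁ - p₂‖ = 0 := le_antisymm (by nlinarith [norm_nonneg (p₁ - p₂)]) (norm_nonneg _)
      exact norm_eq_zero.mp this
    exact ⟨hu12, sub_eq_zero.mp hdp0⟩
  -- assemble
  refine ⟨(u, p), ⟨(cond1_iff u p).mpr hsol1, (cond2_iff u).mpr hsol2⟩, ?_⟩
  rintro ⟨u', p'⟩ ⟨hc1, hc2⟩
  have h1' := (cond1_iff u' p').mp hc1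
  have h2' := (cond2_iff u').mp hc2
  obtain ⟨hu, hp⟩ := uniq u' p' u p h1' h2' hsol1 hsol2
  exact Prod.ext hu hp
end

section
/- Let H be a real Hilbert space with closed subspace W, Π₀ the orthogonal projection onto W, T₀ = I − Π₀, and s a symmetric positive semidefinite bilinear form with ι₊‖T₀v‖² ≤ s(T₀v,T₀v) ≤ ι⁺‖T₀v‖² for constants 0 < ι₊ ≤ ι⁺. Then a_h(u,v) := ⟪Π₀u, Π₀v⟫ + s(T₀u, T₀v) defines an inner product on H whose induced norm is equivalent to the original norm with equivalence constants √min(1,ι₊) and √max(1,ι⁺). -/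
open scoped RealInnerProductSpace

/-- The stabilized VEM bilinear form `a_h(u,v) = ⟪Π₀u, Π₀v⟫ + s(T₀u, T₀v)`
defines an inner product on `H` whose induced norm is equivalent to the
original norm with constants `√min(1,ι₊)` and `√max(1,ι⁺)`. -/
theorem stabilized_form_inner_product_equivalent
    {H : Type*} [NormedAddCommGroup H] [InnerProductSpace ℝ H] [CompleteSpace H]
    (W : Submodule ℝ H) (hW : IsClosed (W : Set H))
    (s : H → H → ℝ)
    (hs_lin₁ : ∀ v, IsLinearMap ℝ fun u => s u v)
    (hs_lin₂ : ∀ u, IsLinearMap ℝ (s u))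
    (hs_symm : ∀ u v, s u v = s v u)
    (hs_psd : ∀ v, 0 ≤ s v v)
    (ι₁ ι₂ : ℝ) (h₁ : 0 < ι₁) (h₁₂ : ι₁ ≤ ι₂)
    (P₀ T₀ : H → H)
    (hP₀ : ∀ v, haveI : CompleteSpace W := hW.completeSpace_coe
      P₀ v = ((W.orthogonalProjectionOnto v : W) : H))
    (hT₀ : ∀ v, T₀ v = v - P₀ v)
    (hs_bounds : ∀ v : H,
      ι₁ * ‖T₀ v‖ ^ 2 ≤ s (T₀ v) (T₀ v) ∧ s (T₀ v) (T₀ v) ≤ ι₂ * ‖T₀ v‖ ^ 2) :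
    let ah : H → H → ℝ := fun u v => ⟪P₀ u, P₀ v⟫ + s (T₀ u) (T₀ v)
    -- `a_h` is an inner product on `H`:
    (∀ u v, ah u v = ah v u) ∧
    (∀ v, IsLinearMap ℝ fun u => ah u v) ∧
    (∀ v : H, v ≠ 0 → 0 < ah v v) ∧
    -- whose induced norm is equivalent to the original one:
    (∀ v : H,
      Real.sqrt (min 1 ι₁) * ‖v‖ ≤ Real.sqrt (ah v v) ∧
      Real.sqrt (ah v v) ≤ Real.sqrt (max 1 ι₂) * ‖v‖) := by
  intro ah
  haveI : CompleteSpace W := hW.completeSpace_coe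
  have hPadd : ∀ u v, P₀ (u + v) = P₀ u + P₀ v := by
    intro u v; simp [hP₀, map_add]
  have hPsmul : ∀ (c : ℝ) v, P₀ (c • v) = c • P₀ v := by
    intro c v; simp [hP₀, map_smul]
  have hTadd : ∀ u v, T₀ (u + v) = T₀ u + T₀ v := by
    intro u v; simp only [hT₀, hPadd]; abel
  have hTsmul : ∀ (c : ℝ) v, T₀ (c • v) = c • T₀ v := by
    intro c v; simp only [hT₀, hPsmul, smul_sub]
  have key : ∀ v : H, ‖v‖ ^ 2 = ‖P₀ v‖ ^ 2 + ‖T₀ v‖ ^ 2 := by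
    intro v
    have hmem : v - P₀ v ∈ Wᗮ := by
      rw [hP₀]; exact Submodule.sub_starProjection_mem_orthogonal (K := W) v
    have hPm : P₀ v ∈ W := by rw [hP₀]; exact (W.orthogonalProjectionOnto v).2
    have horth : ⟪P₀ v, T₀ v⟫ = 0 := by
      rw [hT₀]; exact Submodule.inner_right_of_mem_orthogonal hPm hmem
    have hv : v = P₀ v + T₀ v := by rw [hT₀]; abel
    calc ‖v‖ ^ 2 = ‖P₀ v + T₀ v‖ ^ 2 := by rw [← hv]
      _ = ‖P₀ v‖ ^ 2 + 2 * ⟪P₀ v, T₀ v⟫ + ‖T₀ v‖ ^ 2 := norm_add_sq_real _ _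
      _ = ‖P₀ v‖ ^ 2 + ‖T₀ v‖ ^ 2 := by rw [horth]; ring
  have hlower : ∀ v : H, min 1 ι₁ * ‖v‖ ^ 2 ≤ ah v v := by
    intro v
    have h1 : ah v v = ‖P₀ v‖ ^ 2 + s (T₀ v) (T₀ v) := by
      simp [ah, real_inner_self_eq_norm_sq]
    have h2 := (hs_bounds v).1
    have : min 1 ι₁ * ‖v‖ ^ 2 ≤ ‖P₀ v‖ ^ 2 + ι₁ * ‖T₀ v‖ ^ 2 := by
      rw [key v]
      have hm1 : min 1 ι₁ ≤ 1 := min_le_left _ _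
      have hm2 : min 1 ι₁ ≤ ι₁ := min_le_right _ _
      nlinarith [sq_nonneg ‖P₀ v‖, sq_nonneg ‖T₀ v‖]
    linarith
  have hupper : ∀ v : H, ah v v ≤ max 1 ι₂ * ‖v‖ ^ 2 := by
    intro v
    have h1 : ah v v = ‖P₀ v‖ ^ 2 + s (T₀ v) (T₀ v) := by
      simp [ah, real_inner_self_eq_norm_sq]
    have h2 := (hs_bounds v).2
    have : ‖P₀ v‖ ^ 2 + ι₂ * ‖T₀ v‖ ^ 2 ≤ max 1 ι₂ * ‖v‖ ^ 2 := by
      rw [key v]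
      have hm1 : (1:ℝ) ≤ max 1 ι₂ := le_max_left _ _
      have hm2 : ι₂ ≤ max 1 ι₂ := le_max_right _ _
      nlinarith [sq_nonneg ‖P₀ v‖, sq_nonneg ‖T₀ v‖]
    linarith
  refine ⟨?_, ?_, ?_, ?_⟩
  · intro u v
    simp only [ah]
    rw [real_inner_comm, hs_symm]
  · intro v
    refine ⟨?_, ?_⟩
    · intro u w
      simp only [ah, hPadd, hTadd, inner_add_left, (hs_lin₁ (T₀ v)).map_add]
      ring
    · intro c u
      simp only [ah, hPsmul, hTsmul, real_inner_smul_left, (hs_lin₁ (T₀ v)).map_smul,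
        smul_eq_mul]
      ring
  · intro v hv
    have hnv : 0 < ‖v‖ := norm_pos_iff.mpr hv
    have hmin : 0 < min 1 ι₁ := lt_min one_pos h₁
    calc (0:ℝ) < min 1 ι₁ * ‖v‖ ^ 2 := mul_pos hmin (pow_pos hnv 2)
      _ ≤ ah v v := hlower v
  · intro v
    have hmin : 0 ≤ min 1 ι₁ := le_of_lt (lt_min one_pos h₁)
    have hmax : 0 ≤ max 1 ι₂ := le_trans zero_le_one (le_max_left _ _)
    constructor
    · have : Real.sqrt (min 1 ι₁ * ‖v‖ ^ 2) ≤ Real.sqrt (ah v v) :=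
        Real.sqrt_le_sqrt (hlower v)
      rwa [Real.sqrt_mul hmin, Real.sqrt_sq (norm_nonneg v)] at this
    · have : Real.sqrt (ah v v) ≤ Real.sqrt (max 1 ι₂ * ‖v‖ ^ 2) :=
        Real.sqrt_le_sqrt (hupper v)
      rwa [Real.sqrt_mul hmax, Real.sqrt_sq (norm_nonneg v)] at this
end
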